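/- Every 3-partite tournament D with minimum out-degree at least 2k-1 contains k vertex-disjoint directed cycles. -/

import Mathlib

/-- `c : ZMod m → V` is a directed cycle of length `m` (arcs `c i → c (i+1)`). -/
def IsCycleOn {V : Type*} (A : V → V → Prop) (m : ℕ) (c : ZMod m → V) : Prop :=
  2 ≤ m ∧ Function.Injective c ∧ ∀ i : ZMod m, A (c i) (c (i + 1))

/-- A family of `k` pairwise vertex-disjoint directed cycles, of lengths `m i`. -/
def DisjointCycles {V : Type*} (A : V → V → Prop) (k : ℕ) (m : Fin k → ℕ)
    (c : ∀ i : Fin k, ZMod (m i) → V) : Prop :=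
  (∀ i, IsCycleOn A (m i) (c i)) ∧
    ∀ i j, i ≠ j → Disjoint (Set.range (c i)) (Set.range (c j))

/-- The digraph with arc relation `A` has `k` pairwise vertex-disjoint directed cycles. -/
def HasKDisjointCycles {V : Type*} (A : V → V → Prop) (k : ℕ) : Prop :=
  ∃ (m : Fin k → ℕ) (c : ∀ i, ZMod (m i) → V), DisjointCycles A k m c

/-- The digraph with arc relation `A` has `k` pairwise vertex-disjoint directed triangles. -/
def HasKDisjointTriangles {V : Type*} (A : V → V → Prop) (k : ℕ) : Prop :=
  ∃ c : ∀ _ : Fin k, ZMod 3 → V, DisjointCycles A k (fun _ => 3) c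

/-- `A` is (the arc relation of) a multipartite tournament with partition map `p`. -/
structure IsMultipartiteTournament {V ι : Type*} (A : V → V → Prop) (p : V → ι) : Prop where
  not_adj_same : ∀ x y, p x = p y → ¬ A x y
  total : ∀ x y, p x ≠ p y → A x y ∨ A y x
  asymm : ∀ x y, A x y → ¬ A y x

/-- Every vertex has out-degree at least `d`. -/
def MinOutDegreeAtLeast {V : Type*} (A : V → V → Prop) (d : ℕ) : Prop :=
  ∀ v : V, d ≤ Nat.card {u : V // A v u}

namespace Stmt3Aux

open Relation

variable {V : Type*}

lemma arc_ne {A : V → V → Prop} {p : V → Fin 3} (hmt : IsMultipartiteTournament A p)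
    {u v : V} (h : A u v) : p u ≠ p v :=
  fun he => hmt.not_adj_same u v he h

/-! ### Walks -/

lemma exists_walk_of_reflTransGen {A : V → V → Prop} {a b : V}
    (h : Relation.ReflTransGen A a b) :
    ∃ (n : ℕ) (g : ℕ → V), g 0 = a ∧ g n = b ∧ ∀ i < n, A (g i) (g (i + 1)) := by
  induction h with
  | refl => exact ⟨0, fun _ => a, rfl, rfl, by omega⟩
  | @tail b c hab hbc ih =>
    obtain ⟨n, g, h0, hn, harc⟩ := ih
    refine ⟨n + 1, fun i => if i = n + 1 then c else g i, by simp [h0], by simp, ?_⟩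
    intro i hi
    rcases Nat.lt_or_ge i n with h | h
    · simpa [Nat.ne_of_lt h, Nat.ne_of_lt (by omega : i < n+1), Nat.ne_of_lt (by omega : i+1 < n+1)] using
        harc i h
    · have : i = n := by omega
      subst this
      simpa [Nat.ne_of_lt (by omega : i < i+1), hn] using hbc

lemma reach_preserve {A : V → V → Prop} {P : V → Prop}
    (hcl : ∀ u w, P u → A u w → P w) {a b : V}
    (h : Relation.ReflTransGen A a b) (ha : P a) : P b := by
  induction h with
  | refl => exact ha
  | tail hab hbc ih => exact hcl _ _ ih hbc

lemma reach_restrict {A : V → V → Prop} {P : V → Prop}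
    (hcl : ∀ u w, P u → A u w → P w) {a b : V}
    (h : Relation.ReflTransGen A a b) (ha : P a) (hb : P b) :
    Relation.ReflTransGen (fun u w : Subtype P => A u.1 w.1) ⟨a, ha⟩ ⟨b, hb⟩ := by
  induction h with
  | refl => exact .refl
  | @tail x y hax hxy ih =>
    exact Relation.ReflTransGen.tail
      (ih (Stmt3Aux.reach_preserve hcl hax ha)) hxy

/-! ### Cycles as lists -/

/-- `CycR A x l` : `x :: l` is (the vertex list of) a directed cycle of length `≥ 3`. -/
def CycR (A : V → V → Prop) (x : V) (l : List V) : Prop :=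
  List.Chain A x (l ++ [x]) ∧ (x :: l).Nodup ∧ 3 ≤ (x :: l).length

lemma chain_range {A : V → V → Prop} :
    ∀ (n : ℕ) (w : ℕ → V), (∀ t < n, A (w t) (w (t + 1))) →
      List.Chain A (w 0) ((List.range n).map (fun t => w (t + 1))) := by
  intro n
  induction n with
  | zero => intro w _; simp; exact List.Chain.nil
  | succ n ih =>
    intro w hw
    rw [List.range_succ_eq_map, List.map_cons, List.map_map]
    refine List.Chain.cons (hw 0 (by omega)) ?_
    have := ih (fun t => w (t + 1)) (fun t ht => hw (t + 1) (by omega))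
    simpa [Function.comp_def] using this

lemma exists_cycR [Fintype V] [Nonempty V] {A : V → V → Prop}
    (hloop : ∀ v, ¬ A v v) (hasymm : ∀ u v, A u v → ¬ A v u)
    (hout : ∀ v, ∃ u, A v u) : ∃ x l, CycR A x l := by
  classical
  choose f hf using hout
  set g : ℕ → V := fun n => f^[n] (Classical.arbitrary V) with hg
  have hgarc : ∀ n, A (g n) (g (n + 1)) := by
    intro n
    have : g (n + 1) = f (g n) := Function.iterate_succ_apply' f n _
    rw [this]; exact hf _
  obtain ⟨i, j, hij, heq⟩ := Finite.exists_ne_map_eq_of_infinite g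
  -- closed walks exist
  have hWex : ∃ n, 0 < n ∧ ∃ w : ℕ → V, w n = w 0 ∧ ∀ t < n, A (w t) (w (t + 1)) := by
    rcases Nat.lt_or_ge i j with h | h
    · exact ⟨j - i, by omega, fun t => g (i + t), by
        simpa [Nat.add_sub_cancel' h.le] using heq.symm, fun t ht => hgarc (i + t)⟩
    · have h' : j < i := by omega
      exact ⟨i - j, by omega, fun t => g (j + t), by
        simpa [Nat.add_sub_cancel' h'.le] using heq, fun t ht => hgarc (j + t)⟩
  set n := Nat.find hWex with hn
  obtain ⟨hn0, w, hwc, hwarc⟩ := Nat.find_spec hWex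
  rw [← hn] at hn0 hwc hwarc
  have hdist : ∀ s t, s < t → t < n → w s ≠ w t := by
    intro s t hst htn hEq
    have htn' : t < Nat.find hWex := hn ▸ htn
    have : 0 < t - s ∧ t - s < n := by omega
    refine Nat.find_min hWex (by omega : t - s < Nat.find hWex)
      ⟨this.1, fun u => w (s + u), ?_, fun u hu => hwarc (s + u) (by omega)⟩
    show w (s + (t - s)) = w (s + 0)
    rw [Nat.add_zero, show s + (t - s) = t by omega]
    exact hEq.symm
  have hn3 : 3 ≤ n := by
    by_contra h
    interval_cases n
    · refine hloop (w 0) ?_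
      have h1 := hwarc 0 (by omega)
      rwa [show (0:ℕ) + 1 = 1 from rfl, hwc] at h1
    · have h01 : A (w 0) (w 1) := by simpa using hwarc 0 (by omega)
      have h12 : A (w 1) (w 0) := by
        have := hwarc 1 (by omega)
        rwa [show (1:ℕ) + 1 = 2 from rfl, hwc] at this
      exact hasymm _ _ h01 h12
  refine ⟨w 0, (List.range (n - 1)).map (fun t => w (t + 1)), ?_, ?_, ?_⟩
  · have : (List.range (n - 1)).map (fun t => w (t + 1)) ++ [w 0]
        = (List.range n).map (fun t => w (t + 1)) := by
      conv_rhs => rw [show n = (n - 1) + 1 by omega, List.range_succ]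
      rw [List.map_append]
      congr 1
      simp only [List.map_cons, List.map_nil]
      rw [show n - 1 + 1 = n by omega, hwc]
    rw [this]
    exact Stmt3Aux.chain_range n w hwarc
  · rw [List.nodup_cons]
    constructor
    · intro hmem
      rw [List.mem_map] at hmem
      obtain ⟨t, ht, hEq⟩ := hmem
      rw [List.mem_range] at ht
      exact hdist 0 (t + 1) (by omega) (by omega) hEq.symm
    · refine List.Nodup.map_on ?_ List.nodup_range
      intro s hs t ht hEq
      rw [List.mem_range] at hs ht
      by_contra hne
      rcases Nat.lt_or_ge s t with h | h
      · exact hdist (s + 1) (t + 1) (by omega) (by omega) hEq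
      · exact hdist (t + 1) (s + 1) (by omega) (by omega) hEq.symm
  · simp [List.length_map, List.length_range]
    omega

lemma exists_short_cycR {A : V → V → Prop} {p : V → Fin 3}
    (hmt : IsMultipartiteTournament A p)
    (hex : ∃ x l, CycR A x l) :
    ∃ x l, CycR A x l ∧ (x :: l).length ≤ 4 := by
  classical
  have hexn : ∃ n, ∃ x l, CycR A x l ∧ (x :: l).length = n := by
    obtain ⟨x, l, h⟩ := hex
    exact ⟨_, x, l, h, rfl⟩
  set n := Nat.find hexn with hn
  obtain ⟨x, l, hc, hlen⟩ := Nat.find_spec hexn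
  rw [← hn] at hlen
  by_cases hle : n ≤ 4
  · exact ⟨x, l, hc, by omega⟩
  exfalso
  have hlt : 5 ≤ (x :: l).length := by omega
  rcases l with _ | ⟨v1, _ | ⟨v2, _ | ⟨v3, _ | ⟨v4, rest⟩⟩⟩⟩ <;>
    simp only [List.length_cons, List.length_nil] at hlt <;> try omega
  obtain ⟨hch, hnd, -⟩ := hc
  -- extract arcs
  unfold List.Chain at hch
  rw [List.cons_append, List.chain_cons] at hch
  obtain ⟨a01, hch⟩ := hch
  rw [List.cons_append, List.chain_cons] at hch
  obtain ⟨a12, hch⟩ := hch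
  rw [List.cons_append, List.chain_cons] at hch
  obtain ⟨a23, hch⟩ := hch
  -- hch : Chain A v3 ((v4 :: rest) ++ [x])
  have hshorter : ∀ m, m < n → ∀ y l', CycR A y l' → (y :: l').length ≠ m := by
    intro m hm y l' hcy hEq
    exact Nat.find_min hexn (hn ▸ hm) ⟨y, l', hcy, hEq⟩
  by_cases hp02 : p x = p v2
  · -- x, v2 in same part, so x, v3 in different parts
    have hp23 : p v2 ≠ p v3 := Stmt3Aux.arc_ne hmt a23
    have hp03 : p x ≠ p v3 := by rw [hp02]; exact hp23
    rcases hmt.total x v3 hp03 with h | h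
    · -- shorter cycle x :: v3 :: v4 :: rest
      refine hshorter ((x :: v3 :: v4 :: rest).length) (by simp at hlen ⊢; omega)
        x (v3 :: v4 :: rest) ⟨?_, ?_, by simp⟩ rfl
      · unfold List.Chain
        rw [List.cons_append, List.chain_cons]
        exact ⟨h, hch⟩
      · refine List.Nodup.sublist ?_ hnd
        refine List.Sublist.cons₂ x ?_
        exact (List.sublist_cons_self v2 _).trans (List.sublist_cons_self v1 _)
    · -- 4-cycle x v1 v2 v3
      refine hshorter 4 (by omega) x [v1, v2, v3] ⟨?_, ?_, by simp⟩ (by simp)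
      · simp only [List.cons_append, List.nil_append, List.Chain, List.chain_cons, List.Chain.nil, List.IsChain.singleton,
          and_true]
        exact ⟨a01, a12, a23, h⟩
      · refine List.Nodup.sublist ?_ hnd
        refine List.Sublist.cons₂ x (List.Sublist.cons₂ v1 (List.Sublist.cons₂ v2
          (List.Sublist.cons₂ v3 (List.nil_sublist _))))
  · rcases hmt.total x v2 hp02 with h | h
    · -- shorter cycle x :: v2 :: v3 :: v4 :: rest
      refine hshorter ((x :: v2 :: v3 :: v4 :: rest).length) (by simp at hlen ⊢; omega)
        x (v2 :: v3 :: v4 :: rest) ⟨?_, ?_, by simp⟩ rfl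
      · unfold List.Chain
        rw [List.cons_append, List.chain_cons]
        refine ⟨h, ?_⟩
        rw [List.cons_append, List.chain_cons]
        exact ⟨a23, hch⟩
      · refine List.Nodup.sublist ?_ hnd
        exact List.Sublist.cons₂ x (List.sublist_cons_self v1 _)
    · -- triangle x v1 v2
      refine hshorter 3 (by omega) x [v1, v2] ⟨?_, ?_, by simp⟩ (by simp)
      · simp only [List.cons_append, List.nil_append, List.Chain, List.chain_cons, List.Chain.nil, List.IsChain.singleton,
          and_true]
        exact ⟨a01, a12, h⟩
      · refine List.Nodup.sublist ?_ hnd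
        exact List.Sublist.cons₂ x (List.Sublist.cons₂ v1 (List.Sublist.cons₂ v2
          (List.nil_sublist _)))

/-! ### Triangle-free structure -/

section TriangleFree

variable {A : V → V → Prop} {p : V → Fin 3}

/-- In a triangle-free multipartite tournament, every 4-cycle alternates between two parts. -/
lemma quad_alt (hmt : IsMultipartiteTournament A p)
    (htf : ∀ a b c, A a b → A b c → ¬ A c a)
    {c0 c1 c2 c3 : V} (a01 : A c0 c1) (a12 : A c1 c2) (a23 : A c2 c3) (a30 : A c3 c0) :
    p c0 = p c2 ∧ p c1 = p c3 := by
  constructor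
  · by_contra hne
    rcases hmt.total c0 c2 hne with h | h
    · exact htf c0 c2 c3 h a23 a30
    · exact htf c0 c1 c2 a01 a12 h
  · by_contra hne
    rcases hmt.total c1 c3 hne with h | h
    · exact htf c1 c3 c0 h a30 a01
    · exact htf c1 c2 c3 a12 a23 h

/-- A vertex in the third part either dominates, or is dominated by, a 4-cycle. -/
lemma gamma_dichotomy (hmt : IsMultipartiteTournament A p)
    (htf : ∀ a b c, A a b → A b c → ¬ A c a)
    {c0 c1 c2 c3 z : V} (a01 : A c0 c1) (a12 : A c1 c2) (a23 : A c2 c3) (a30 : A c3 c0)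
    (alt02 : p c0 = p c2) (alt13 : p c1 = p c3)
    (hz0 : p z ≠ p c0) (hz1 : p z ≠ p c1) :
    (A z c0 ∧ A z c1 ∧ A z c2 ∧ A z c3) ∨ (A c0 z ∧ A c1 z ∧ A c2 z ∧ A c3 z) := by
  have hz2 : p z ≠ p c2 := alt02 ▸ hz0
  have hz3 : p z ≠ p c3 := alt13 ▸ hz1
  have s01 : A z c0 → A z c1 := fun h =>
    (hmt.total z c1 hz1).resolve_right (htf z c0 c1 h a01)
  have s12 : A z c1 → A z c2 := fun h =>
    (hmt.total z c2 hz2).resolve_right (htf z c1 c2 h a12)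
  have s23 : A z c2 → A z c3 := fun h =>
    (hmt.total z c3 hz3).resolve_right (htf z c2 c3 h a23)
  have s30 : A z c3 → A z c0 := fun h =>
    (hmt.total z c0 hz0).resolve_right (htf z c3 c0 h a30)
  rcases hmt.total z c0 hz0 with h | h
  · exact Or.inl ⟨h, s01 h, s12 (s01 h), s23 (s12 (s01 h))⟩
  · have h3 : A c3 z := (hmt.total z c3 hz3).resolve_left
      (fun h' => hmt.asymm _ _ h (s30 h'))
    have h2 : A c2 z := (hmt.total z c2 hz2).resolve_left
      (fun h' => hmt.asymm _ _ h3 (s23 h'))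
    have h1 : A c1 z := (hmt.total z c1 hz1).resolve_left
      (fun h' => hmt.asymm _ _ h2 (s12 h'))
    exact Or.inr ⟨h, h1, h2, h3⟩

/-- Key minimal-walk lemma: in a triangle-free multipartite tournament, if a vertex `z`
of the third part is reachable from an alternating 4-cycle, then the cycle dominates `z`. -/
lemma minwalk (hmt : IsMultipartiteTournament A p)
    (htf : ∀ a b c, A a b → A b c → ¬ A c a)
    {c0 c1 c2 c3 z : V} (a01 : A c0 c1) (a12 : A c1 c2) (a23 : A c2 c3) (a30 : A c3 c0)
    (alt02 : p c0 = p c2) (alt13 : p c1 = p c3)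
    (hz0 : p z ≠ p c0) (hz1 : p z ≠ p c1)
    (hreach : Relation.ReflTransGen A c0 z) :
    A c0 z ∧ A c1 z ∧ A c2 z ∧ A c3 z := by
  classical
  set inC : V → Prop := fun w => w = c0 ∨ w = c1 ∨ w = c2 ∨ w = c3 with hinC
  have hpinC : ∀ w, inC w → p w = p c0 ∨ p w = p c1 := by
    intro w hw
    rcases hw with rfl | rfl | rfl | rfl
    · exact Or.inl rfl
    · exact Or.inr rfl
    · exact Or.inl alt02.symm
    · exact Or.inr alt13.symm
  have hWex : ∃ n, ∃ g : ℕ → V, inC (g 0) ∧ g n = z ∧ ∀ i < n, A (g i) (g (i + 1)) := by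
    obtain ⟨n, g, h0, hn, harc⟩ := Stmt3Aux.exists_walk_of_reflTransGen hreach
    exact ⟨n, g, Or.inl h0, hn, harc⟩
  set n := Nat.find hWex with hn
  obtain ⟨g, hg0, hgn, harc⟩ := Nat.find_spec hWex
  rw [← hn] at hgn harc
  have hmin : ∀ m, m < n → ¬ (∃ g : ℕ → V, inC (g 0) ∧ g m = z ∧ ∀ i < m, A (g i) (g (i + 1))) :=
    fun m hm => Nat.find_min hWex (hn ▸ hm)
  have hn1 : 1 ≤ n := by
    rcases Nat.eq_zero_or_pos n with h | h
    · exfalso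
      rw [h] at hgn
      rcases hpinC (g 0) hg0 with hp | hp <;> rw [hgn] at hp
      · exact hz0 hp
      · exact hz1 hp
    · exact h
  -- no arc from the cycle into the walk at positions ≥ 2
  have hf2 : ∀ i, 2 ≤ i → i ≤ n → ∀ w', inC w' → ¬ A w' (g i) := by
    intro i h2 hin w' hw' harcw
    refine hmin (n - i + 1) (by omega) ⟨fun j => if j = 0 then w' else g (i + j - 1), ?_, ?_, ?_⟩
    · simpa using hw'
    · have hne : n - i + 1 ≠ 0 := by omega
      simp only [hne, if_neg hne]
      rw [show i + (n - i + 1) - 1 = n by omega]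
      exact hgn
    · intro j hj
      rcases Nat.eq_zero_or_pos j with rfl | hj0
      · simp only [if_pos rfl, if_neg (by omega : (1:ℕ) ≠ 0)]
        rw [show i + 1 - 1 = i by omega]
        exact harcw
      · simp only [if_neg (by omega : j ≠ 0), if_neg (by omega : j + 1 ≠ 0)]
        rw [show i + (j + 1) - 1 = (i + j - 1) + 1 by omega]
        exact harc (i + j - 1) (by omega)
  -- walk parts alternate with period 2
  have hf3 : ∀ i, i + 2 ≤ n → p (g i) = p (g (i + 2)) := by
    intro i hi
    by_contra hne
    rcases hmt.total _ _ hne with h | h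
    · refine hmin (n - 1) (by omega) ⟨fun j => if j ≤ i then g j else g (j + 1), ?_, ?_, ?_⟩
      · simpa using hg0
      · simp only [if_neg (by omega : ¬ (n - 1 ≤ i))]
        rw [show n - 1 + 1 = n by omega]
        exact hgn
      · intro j hj
        rcases lt_trichotomy j i with hji | hji | hji
        · simp only [if_pos (by omega : j ≤ i), if_pos (by omega : j + 1 ≤ i)]
          exact harc j (by omega)
        · subst hji
          simp only [if_pos le_rfl, if_neg (by omega : ¬ (j + 1 ≤ j))]
          exact h
        · simp only [if_neg (by omega : ¬ (j ≤ i)), if_neg (by omega : ¬ (j + 1 ≤ i))]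
          exact harc (j + 1) (by omega)
    · exact htf (g i) (g (i + 1)) (g (i + 2)) (harc i (by omega)) (harc (i + 1) (by omega)) h
  have hf4 : ∀ d, 2 * d ≤ n → p (g (n - 2 * d)) = p z := by
    intro d
    induction d with
    | zero =>
      intro _
      rw [show n - 2 * 0 = n by omega, hgn]
    | succ d ih =>
      intro hd
      have h1 : (n - 2 * (d + 1)) + 2 ≤ n := by omega
      have := hf3 (n - 2 * (d + 1)) h1
      rw [show n - 2 * (d + 1) + 2 = n - 2 * d by omega] at this
      rw [show n - 2 * (d+1) = n - 2*(d+1) from rfl]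
      rw [this]
      exact ih (by omega)
  have hodd : n % 2 = 1 := by
    by_contra h
    have h2 : 2 * (n / 2) ≤ n := by omega
    have := hf4 (n / 2) h2
    rw [show n - 2 * (n / 2) = 0 by omega] at this
    rcases hpinC (g 0) hg0 with hp | hp <;> rw [this] at hp
    · exact hz0 hp
    · exact hz1 hp
  by_cases hn1' : n = 1
  · have hgn1 : g 1 = z := by rw [← hn1']; exact hgn
    have ha0z : A (g 0) z := by
      have := harc 0 (by omega)
      rwa [show (0:ℕ) + 1 = 1 from rfl, hgn1] at this
    rcases gamma_dichotomy hmt htf a01 a12 a23 a30 alt02 alt13 hz0 hz1 with hd | hd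
    · exfalso
      rcases hg0 with h | h | h | h <;> rw [h] at ha0z
      · exact hmt.asymm _ _ ha0z hd.1
      · exact hmt.asymm _ _ ha0z hd.2.1
      · exact hmt.asymm _ _ ha0z hd.2.2.1
      · exact hmt.asymm _ _ ha0z hd.2.2.2
    · exact hd
  · exfalso
    have hn3 : 3 ≤ n := by omega
    have hv1 : p (g 1) = p z := by
      have := hf4 ((n - 1) / 2) (by omega)
      rwa [show n - 2 * ((n - 1) / 2) = 1 by omega] at this
    rcases gamma_dichotomy hmt htf a01 a12 a23 a30 alt02 alt13
        (hv1 ▸ hz0) (hv1 ▸ hz1) with hd | hd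
    · -- g 1 dominates the cycle, contradicting the arc g 0 → g 1
      have ha01 : A (g 0) (g 1) := harc 0 (by omega)
      rcases hg0 with h | h | h | h <;> rw [h] at ha01
      · exact hmt.asymm _ _ ha01 hd.1
      · exact hmt.asymm _ _ ha01 hd.2.1
      · exact hmt.asymm _ _ ha01 hd.2.2.1
      · exact hmt.asymm _ _ ha01 hd.2.2.2
    · -- the cycle dominates g 1; get a triangle g1 → g2 → s → g1
      obtain ⟨s, hs_arc, hsinC⟩ : ∃ s, A (g 0) s ∧ inC s := by
        rcases hg0 with h | h | h | h <;> rw [h]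
        · exact ⟨c1, a01, Or.inr (Or.inl rfl)⟩
        · exact ⟨c2, a12, Or.inr (Or.inr (Or.inl rfl))⟩
        · exact ⟨c3, a23, Or.inr (Or.inr (Or.inr rfl))⟩
        · exact ⟨c0, a30, Or.inl rfl⟩
      have hp02' : p (g 2) = p (g 0) := (hf3 0 (by omega)).symm
      have hps : p (g 2) ≠ p s := by
        rw [hp02']
        exact Stmt3Aux.arc_ne hmt hs_arc
      have harc2s : A (g 2) s := by
        rcases hmt.total _ _ hps with h | h
        · exact h
        · exact absurd h (hf2 2 le_rfl (by omega) s hsinC)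
      have hsv1 : A s (g 1) := by
        rcases hsinC with h | h | h | h <;> rw [h]
        · exact hd.1
        · exact hd.2.1
        · exact hd.2.2.1
        · exact hd.2.2.2
      exact htf (g 1) (g 2) s (harc 1 (by omega)) harc2s hsv1

end TriangleFree

/-! ### Bondy's theorem for 3 parts -/

lemma fin3_cases : ∀ a b c t : Fin 3, a ≠ b → b ≠ c → a ≠ c → t = a ∨ t = b ∨ t = c := by
  decide

lemma fin3_third : ∀ a b : Fin 3, a ≠ b → ∃ c, c ≠ a ∧ c ≠ b := by decide

lemma fin3_two : ∀ a t : Fin 3, t ≠ a → t = a + 1 ∨ t = a + 2 := by decide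

lemma fin3_succ_ne : ∀ a : Fin 3, a + 1 ≠ a ∧ a + 2 ≠ a := by decide

/-- Bondy: a strongly connected tournament meeting all three parts has a directed triangle. -/
lemma bondy3 [Fintype V] {A : V → V → Prop} {p : V → Fin 3}
    (hmt : IsMultipartiteTournament A p)
    (hstrong : ∀ u v : V, Relation.ReflTransGen A u v)
    (hall : ∀ t : Fin 3, ∃ v, p v = t) :
    ∃ x y z, A x y ∧ A y z ∧ A z x := by
  by_contra htri
  have htf : ∀ a b c, A a b → A b c → ¬ A c a := fun a b c h1 h2 h3 => htri ⟨a, b, c, h1, h2, h3⟩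
  have : Nonempty V := ⟨(hall 0).choose⟩
  have hout : ∀ v, ∃ u, A v u := by
    intro v
    obtain ⟨u, hu⟩ := hall (p v + 1)
    have hne : p u ≠ p v := by rw [hu]; exact (fin3_succ_ne (p v)).1
    have hne' : u ≠ v := fun h => hne (by rw [h])
    rcases (hstrong v u).cases_head with h | ⟨w, hw, _⟩
    · exact (hne' h.symm).elim
    · exact ⟨w, hw⟩
  obtain ⟨x0, l0, hc0⟩ := exists_cycR (fun v => hmt.not_adj_same v v rfl)
    hmt.asymm hout
  obtain ⟨x, l, hc, hlen⟩ := exists_short_cycR hmt ⟨x0, l0, hc0⟩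
  obtain ⟨hch, hnd, hlen3⟩ := hc
  rcases l with _ | ⟨y, _ | ⟨z, _ | ⟨w, _ | ⟨q, rest⟩⟩⟩⟩ <;>
      simp only [List.length_cons, List.length_nil] at hlen3 hlen <;> try omega
  · -- triangle
    simp only [List.cons_append, List.nil_append, List.Chain, List.chain_cons, List.Chain.nil, List.IsChain.singleton,
      and_true] at hch
    exact htri ⟨x, y, z, hch.1, hch.2.1, hch.2.2⟩
  · -- 4-cycle
    simp only [List.cons_append, List.nil_append, List.Chain, List.chain_cons, List.Chain.nil, List.IsChain.singleton,
      and_true] at hch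
    obtain ⟨a01, a12, a23, a30⟩ := hch
    obtain ⟨alt02, alt13⟩ := quad_alt hmt htf a01 a12 a23 a30
    have hpxy : p x ≠ p y := arc_ne hmt a01
    obtain ⟨t, ht1, ht2⟩ := fin3_third (p x) (p y) hpxy
    obtain ⟨z0, hz0⟩ := hall t
    have hz0x : p z0 ≠ p x := by rw [hz0]; exact ht1
    have hz0y : p z0 ≠ p y := by rw [hz0]; exact ht2
    have h1 := minwalk hmt htf a01 a12 a23 a30 alt02 alt13 hz0x hz0y (hstrong x z0)
    -- flipped digraph
    have hmt' : IsMultipartiteTournament (Function.swap A) p :=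
      ⟨fun a b hab h => hmt.not_adj_same b a hab.symm h,
       fun a b hab => (hmt.total b a hab.symm),
       fun a b hab h => hmt.asymm b a hab h⟩
    have htf' : ∀ a b c, Function.swap A a b → Function.swap A b c → ¬ Function.swap A c a :=
      fun a b c h1 h2 h3 => htri ⟨a, c, b, h3, h2, h1⟩
    have h2 := minwalk hmt' htf' (c0 := w) (c1 := z) (c2 := y) (c3 := x) (z := z0)
      a23 a12 a01 a30 (alt13.symm) (alt02.symm)
      (by rw [alt13] at hz0y; exact hz0y) (by rw [alt02] at hz0x; exact hz0x)
      (Relation.reflTransGen_swap.mpr (hstrong z0 w))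
    exact hmt.asymm _ _ h1.1 h2.2.2.2

/-! ### From list cycles to `IsCycleOn` -/

lemma getElem_congr' {l : List V} {m m' : ℕ} (hm : m < l.length) (h : m = m') :
    l[m]'hm = l[m']'(h ▸ hm) := by subst h; rfl

lemma isCycleOn_of_cycR {A : V → V → Prop} {x : V} {l : List V} (h : CycR A x l) :
    ∃ c : ZMod (x :: l).length → V, IsCycleOn A (x :: l).length c ∧
      (∀ i, c i ∈ x :: l) ∧ ∀ v ∈ x :: l, ∃ i, c i = v := by
  obtain ⟨hch, hnd, hlen⟩ := h
  have hlen' : 3 ≤ (x :: l).length := hlen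
  set L := x :: l with hL
  haveI : NeZero L.length := ⟨by omega⟩
  haveI : Fact (1 < L.length) := ⟨by omega⟩
  have hch' : List.Chain' A (L ++ [x]) := by
    rw [hL, List.cons_append]
    exact hch
  have harc : ∀ (s t : ℕ) (hs : s < L.length) (ht : t < L.length),
      t = (s + 1) % L.length → A (L[s]'hs) (L[t]'ht) := by
    intro s t hs ht hEq
    have hchg := List.isChain_iff_getElem.1 hch' s (by simp; omega)
    have e1 : (L ++ [x])[s]'(by simp; omega) = L[s]'hs := List.getElem_append_left hs
    rw [e1] at hchg
    rcases Nat.lt_or_ge (s + 1) L.length with h1 | h1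
    · have e2 : (L ++ [x])[s+1]'(by simp; omega) = L[s+1]'h1 := List.getElem_append_left h1
      rw [e2] at hchg
      have : t = s + 1 := by rw [hEq, Nat.mod_eq_of_lt h1]
      rwa [getElem_congr' ht this]
    · have hsl : s + 1 = L.length := by omega
      have e2 : (L ++ [x])[s+1]'(by simp; omega) = x := by
        rw [List.getElem_append_right (by omega)]
        simp [hsl]
      rw [e2] at hchg
      have ht0 : t = 0 := by rw [hEq, hsl]; simp
      have e3 : L[t]'ht = x := by
        rw [getElem_congr' ht ht0]
        exact List.getElem_cons_zero x l (by simp)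
      rwa [e3]
  refine ⟨fun i => L[i.val]'(ZMod.val_lt i), ⟨by omega, ?_, ?_⟩, ?_, ?_⟩
  · intro i j hij
    have := (hnd.getElem_inj_iff).1 hij
    exact ZMod.val_injective L.length this
  · intro i
    refine harc i.val (i+1).val (ZMod.val_lt i) (ZMod.val_lt (i+1)) ?_
    rw [ZMod.val_add, ZMod.val_one]
  · intro i
    exact List.getElem_mem _
  · intro v hv
    obtain ⟨m, hm, hEq⟩ := List.mem_iff_getElem.1 hv
    refine ⟨(m : ZMod L.length), ?_⟩
    exact (getElem_congr' (l := L) (ZMod.val_lt ((m : ZMod L.length)))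
      (ZMod.val_cast_of_lt hm)).trans hEq

/-! ### Counting and assembling -/

lemma hasK_zero {A : V → V → Prop} : HasKDisjointCycles A 0 :=
  ⟨fun i => i.elim0, fun i => i.elim0, fun i => i.elim0, fun i j _ => i.elim0⟩

lemma nonempty_of_card {S : Type*} (h : 1 ≤ Nat.card S) : Nonempty S := by
  by_contra hne
  rw [not_nonempty_iff] at hne
  rw [Nat.card_of_isEmpty] at h
  omega

lemma card_out_ge [Fintype V] (Q P : V → Prop) (a b : V)
    (h : ∀ w, Q w → ¬ P w → w = a ∨ w = b) :
    Nat.card {w // Q w} - 2 ≤ Nat.card {w // P w ∧ Q w} := by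
  classical
  rw [Nat.card_eq_fintype_card, Nat.card_eq_fintype_card, Fintype.card_subtype,
    Fintype.card_subtype]
  have hsub : Finset.univ.filter (fun x => Q x) ⊆ (Finset.univ.filter (fun x => P x ∧ Q x)) ∪ {a, b} := by
    intro w hw
    simp only [Finset.mem_filter, Finset.mem_univ, true_and] at hw
    simp only [Finset.mem_union, Finset.mem_filter, Finset.mem_univ, true_and,
      Finset.mem_insert, Finset.mem_singleton]
    by_cases hP : P w
    · exact Or.inl ⟨hP, hw⟩
    · exact Or.inr (h w hw hP)
  have h1 := Finset.card_le_card hsub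
  have h2 := Finset.card_union_le (Finset.univ.filter (fun x => P x ∧ Q x)) ({a, b} : Finset V)
  have h3 : ({a, b} : Finset V).card ≤ 2 := Finset.card_insert_le a {b} |>.trans (by simp)
  omega

lemma minOut_restrict [Fintype V] {A : V → V → Prop} (P : V → Prop) {d : ℕ}
    (h : ∀ v : Subtype P, d ≤ Nat.card {w : V // P w ∧ A v.1 w}) :
    MinOutDegreeAtLeast (fun u w : Subtype P => A u.1 w.1) d := by
  intro v
  have e : {u : Subtype P // A v.1 u.1} ≃ {w : V // P w ∧ A v.1 w} :=
    Equiv.subtypeSubtypeEquivSubtypeInter P (A v.1)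
  rw [Nat.card_congr e]
  exact h v

lemma lift_hasK {V' : Type*} {A : V → V → Prop} {A' : V' → V' → Prop} {k : ℕ}
    (f : V' → V) (hfinj : Function.Injective f)
    (hfA : ∀ u w, A' u w → A (f u) (f w)) :
    HasKDisjointCycles A' k → HasKDisjointCycles A k := by
  rintro ⟨m, c, hcyc, hdisj⟩
  refine ⟨m, fun i => f ∘ c i, fun i => ⟨(hcyc i).1, hfinj.comp (hcyc i).2.1,
    fun t => hfA _ _ ((hcyc i).2.2 t)⟩, ?_⟩
  intro i j hij
  rw [Set.range_comp, Set.range_comp]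
  exact (Set.disjoint_image_iff hfinj).2 (hdisj i j hij)

lemma assemble {A : V → V → Prop} {P : V → Prop} {k m0 : ℕ} {c0 : ZMod m0 → V}
    (h0 : IsCycleOn A m0 c0) (hP0 : ∀ i, ¬ P (c0 i))
    (h : HasKDisjointCycles (fun u w : Subtype P => A u.1 w.1) k) :
    HasKDisjointCycles A (k + 1) := by
  obtain ⟨m', c', hcyc, hdisj⟩ := h
  refine ⟨fun i => match i with
            | ⟨0, _⟩ => m0
            | ⟨j+1, hj⟩ => m' ⟨j, by omega⟩,
          fun i => match i with
            | ⟨0, _⟩ => c0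
            | ⟨j+1, hj⟩ => fun t => (c' ⟨j, by omega⟩ t).1, ?_, ?_⟩
  · rintro ⟨_ | j, hj⟩
    · exact h0
    · exact ⟨(hcyc _).1, Subtype.val_injective.comp (hcyc _).2.1,
        fun t => (hcyc _).2.2 t⟩
  · rintro ⟨_ | i, hi⟩ ⟨_ | j, hj⟩ hij
    · exact absurd rfl hij
    · refine Set.disjoint_left.2 ?_
      rintro a ⟨t, ht⟩ ⟨u, hu⟩
      have hPa : P a := by rw [← hu]; exact (c' _ u).2
      have hPa' : ¬ P a := by rw [← ht]; exact hP0 t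
      exact hPa' hPa
    · refine Set.disjoint_left.2 ?_
      rintro a ⟨u, hu⟩ ⟨t, ht⟩
      have hPa : P a := by rw [← hu]; exact (c' _ u).2
      have hPa' : ¬ P a := by rw [← ht]; exact hP0 t
      exact hPa' hPa
    · have : (⟨i, by omega⟩ : Fin k) ≠ ⟨j, by omega⟩ := by
        intro hEq
        apply hij
        rw [Fin.mk.injEq] at hEq ⊢
        omega
      have hd := hdisj _ _ this
      have e1 : Set.range (fun t => ((c' ⟨i, Nat.lt_of_succ_lt_succ hi⟩ t) : V))
          = Subtype.val '' Set.range (c' ⟨i, by omega⟩) := by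
        rw [← Set.range_comp]; rfl
      have e2 : Set.range (fun t => ((c' ⟨j, Nat.lt_of_succ_lt_succ hj⟩ t) : V))
          = Subtype.val '' Set.range (c' ⟨j, by omega⟩) := by
        rw [← Set.range_comp]; rfl
      rw [e1, e2]
      exact (Set.disjoint_image_iff Subtype.val_injective).2 hd

/-! ### The bipartite lemma -/

universe u

lemma bip (k : ℕ) : ∀ {W : Type u} [Fintype W] (A : W → W → Prop) (p : W → Fin 3),
    IsMultipartiteTournament A p → ∀ (α β : Fin 3), (∀ v, p v = α ∨ p v = β) →
    (k ≠ 0 → Nonempty W) → MinOutDegreeAtLeast A (2 * k - 1) → HasKDisjointCycles A k := by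
  induction k with
  | zero =>
    intro W _ A p _ α β _ _ _
    exact hasK_zero
  | succ k ih =>
    intro W _ A p hmt α β hpart hne hδ
    haveI : Nonempty W := hne (by omega)
    classical
    have htf : ∀ a b c, A a b → A b c → ¬ A c a := by
      intro a b c h1 h2 h3
      have d1 := arc_ne hmt h1
      have d2 := arc_ne hmt h2
      have d3 := arc_ne hmt h3
      rcases hpart a with ha | ha <;> rcases hpart b with hb | hb <;>
          rcases hpart c with hc | hc <;>
        first
          | exact d1 (ha.trans hb.symm)
          | exact d2 (hb.trans hc.symm)
          | exact d3 (hc.trans ha.symm)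
    have hout : ∀ v, ∃ w, A v w := by
      intro v
      by_contra hcon
      push_neg at hcon
      haveI : IsEmpty {w // A v w} := ⟨fun w => hcon w.1 w.2⟩
      have := hδ v
      rw [Nat.card_of_isEmpty] at this
      omega
    obtain ⟨x0, l0, hc0⟩ := exists_cycR (fun v => hmt.not_adj_same v v rfl) hmt.asymm hout
    obtain ⟨x, l, hcyc, hlen⟩ := exists_short_cycR hmt ⟨x0, l0, hc0⟩
    obtain ⟨hch, hnd, hlen3⟩ := hcyc
    rcases l with _ | ⟨y, _ | ⟨z, _ | ⟨u, _ | ⟨q, rest⟩⟩⟩⟩ <;>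
        simp only [List.length_cons, List.length_nil] at hlen3 hlen <;> try omega
    · exfalso
      simp only [List.cons_append, List.nil_append, List.Chain, List.chain_cons, List.Chain.nil, List.IsChain.singleton,
        and_true] at hch
      exact htf x y z hch.1 hch.2.1 hch.2.2
    · simp only [List.cons_append, List.nil_append, List.Chain, List.chain_cons, List.Chain.nil, List.IsChain.singleton,
        and_true] at hch
      obtain ⟨a01, a12, a23, a30⟩ := hch
      obtain ⟨alt02, alt13⟩ := quad_alt hmt htf a01 a12 a23 a30
      have hpxy : p x ≠ p y := arc_ne hmt a01
      set P : W → Prop := fun v => ¬ (v = x ∨ v = y ∨ v = z ∨ v = u) with hP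
      have hpair : ∀ v : W, ∃ a b, ∀ w', A v w' → ¬ P w' → w' = a ∨ w' = b := by
        intro v
        have hv : p v = p x ∨ p v = p y := by
          rcases hpart v with h1 | h1 <;> rcases hpart x with h2 | h2 <;>
              rcases hpart y with h3 | h3 <;>
            first
              | exact Or.inl (h1.trans h2.symm)
              | exact Or.inr (h1.trans h3.symm)
              | exact absurd (h2.trans h3.symm) hpxy
        rcases hv with hv | hv
        · refine ⟨y, u, ?_⟩
          intro w' hA hw'
          rw [hP, not_not] at hw'
          rcases hw' with rfl | rfl | rfl | rfl
          · exact absurd hA (hmt.not_adj_same _ _ hv)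
          · exact Or.inl rfl
          · exact absurd hA (hmt.not_adj_same _ _ (hv.trans alt02))
          · exact Or.inr rfl
        · refine ⟨x, z, ?_⟩
          intro w' hA hw'
          rw [hP, not_not] at hw'
          rcases hw' with rfl | rfl | rfl | rfl
          · exact Or.inl rfl
          · exact absurd hA (hmt.not_adj_same _ _ hv)
          · exact Or.inr rfl
          · exact absurd hA (hmt.not_adj_same _ _ (hv.trans alt13))
      have hδ' : ∀ v : Subtype P, 2 * k - 1 ≤ Nat.card {w : W // P w ∧ A v.1 w} := by
        intro v
        obtain ⟨a, b, hab⟩ := hpair v.1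
        have h1 := card_out_ge (A v.1) P a b hab
        have h2 := hδ v.1
        omega
      have hne' : k ≠ 0 → Nonempty (Subtype P) := by
        intro hk
        obtain ⟨a, b, hab⟩ := hpair x
        have h1 := card_out_ge (A x) P a b hab
        have h2 := hδ x
        have h3 : 1 ≤ Nat.card {w : W // P w ∧ A x w} := by omega
        obtain ⟨w0⟩ := nonempty_of_card h3
        exact ⟨⟨w0.1, w0.2.1⟩⟩
      have hrec := ih (fun a b : Subtype P => A a.1 b.1) (fun v => p v.1)
        ⟨fun a b h => hmt.not_adj_same a.1 b.1 h, fun a b h => hmt.total a.1 b.1 h,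
         fun a b h => hmt.asymm a.1 b.1 h⟩ α β (fun v => hpart v.1) hne'
        (minOut_restrict P hδ')
      have hcyc4 : CycR A x [y, z, u] := by
        refine ⟨?_, hnd, by simp⟩
        simp only [List.cons_append, List.nil_append, List.Chain, List.chain_cons, List.Chain.nil, List.IsChain.singleton,
          and_true]
        exact ⟨a01, a12, a23, a30⟩
      obtain ⟨c0, hc0cyc, hc0mem, -⟩ := isCycleOn_of_cycR hcyc4
      refine assemble hc0cyc ?_ hrec
      intro i
      have hmem := hc0mem i
      rw [hP, not_not]
      simpa using hmem

/-! ### The main lemma -/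

lemma main (k : ℕ) : ∀ {W : Type u} [Fintype W] (A : W → W → Prop) (p : W → Fin 3),
    IsMultipartiteTournament A p → (k ≠ 0 → Nonempty W) →
    MinOutDegreeAtLeast A (2 * k - 1) → HasKDisjointCycles A k := by
  induction k with
  | zero =>
    intro W _ A p _ _ _
    exact hasK_zero
  | succ k ih =>
    intro W _ A p hmt hne hδ
    haveI : Nonempty W := hne (by omega)
    classical
    by_cases htri : ∃ x y z : W, A x y ∧ A y z ∧ A z x
    · obtain ⟨x, y, z, hxy, hyz, hzx⟩ := htri
      have hnl : ∀ v : W, ¬ A v v := fun v => hmt.not_adj_same v v rfl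
      have hxyne : x ≠ y := by intro h; subst h; exact hnl _ hxy
      have hyzne : y ≠ z := by intro h; subst h; exact hnl _ hyz
      have hxzne : x ≠ z := by intro h; subst h; exact hnl _ hzx
      have hpxy := arc_ne hmt hxy
      have hpyz := arc_ne hmt hyz
      have hpzx := arc_ne hmt hzx
      set P : W → Prop := fun v => ¬ (v = x ∨ v = y ∨ v = z) with hP
      have hpair : ∀ v : W, ∃ a b, ∀ w', A v w' → ¬ P w' → w' = a ∨ w' = b := by
        intro v
        have hv : p v = p x ∨ p v = p y ∨ p v = p z :=
          fin3_cases (p x) (p y) (p z) (p v) hpxy hpyz (fun h => hpzx h.symm)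
        rcases hv with hv | hv | hv
        · refine ⟨y, z, ?_⟩
          intro w' hA hw'
          rw [hP, not_not] at hw'
          rcases hw' with rfl | rfl | rfl
          · exact absurd hA (hmt.not_adj_same _ _ hv)
          · exact Or.inl rfl
          · exact Or.inr rfl
        · refine ⟨x, z, ?_⟩
          intro w' hA hw'
          rw [hP, not_not] at hw'
          rcases hw' with rfl | rfl | rfl
          · exact Or.inl rfl
          · exact absurd hA (hmt.not_adj_same _ _ hv)
          · exact Or.inr rfl
        · refine ⟨x, y, ?_⟩
          intro w' hA hw'
          rw [hP, not_not] at hw'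
          rcases hw' with rfl | rfl | rfl
          · exact Or.inl rfl
          · exact Or.inr rfl
          · exact absurd hA (hmt.not_adj_same _ _ hv)
      have hδ' : ∀ v : Subtype P, 2 * k - 1 ≤ Nat.card {w : W // P w ∧ A v.1 w} := by
        intro v
        obtain ⟨a, b, hab⟩ := hpair v.1
        have h1 := card_out_ge (A v.1) P a b hab
        have h2 := hδ v.1
        omega
      have hne' : k ≠ 0 → Nonempty (Subtype P) := by
        intro hk
        obtain ⟨a, b, hab⟩ := hpair x
        have h1 := card_out_ge (A x) P a b hab
        have h2 := hδ x
        have h3 : 1 ≤ Nat.card {w : W // P w ∧ A x w} := by omega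
        obtain ⟨w0⟩ := nonempty_of_card h3
        exact ⟨⟨w0.1, w0.2.1⟩⟩
      have hrec := ih (fun a b : Subtype P => A a.1 b.1) (fun v => p v.1)
        ⟨fun a b h => hmt.not_adj_same a.1 b.1 h, fun a b h => hmt.total a.1 b.1 h,
         fun a b h => hmt.asymm a.1 b.1 h⟩ hne' (minOut_restrict P hδ')
      have hcyc3 : CycR A x [y, z] := by
        refine ⟨?_, ?_, by simp⟩
        · simp only [List.cons_append, List.nil_append, List.Chain, List.chain_cons, List.Chain.nil, List.IsChain.singleton,
            and_true]
          exact ⟨hxy, hyz, hzx⟩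
        · simp [hxyne, hyzne, hxzne]
      obtain ⟨c0, hc0cyc, hc0mem, -⟩ := isCycleOn_of_cycR hcyc3
      refine assemble hc0cyc ?_ hrec
      intro i
      have hmem := hc0mem i
      rw [hP, not_not]
      simpa using hmem
    · have htf : ∀ a b c, A a b → A b c → ¬ A c a :=
        fun a b c h1 h2 h3 => htri ⟨a, b, c, h1, h2, h3⟩
      obtain ⟨v0, -, hv0⟩ := Finset.exists_min_image Finset.univ
        (fun v => (Finset.univ.filter (Relation.ReflTransGen A v)).card) Finset.univ_nonempty
      set P : W → Prop := fun w => Relation.ReflTransGen A v0 w with hP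
      have hcl : ∀ a b, P a → A a b → P b := fun a b ha harc => ha.tail harc
      have hstrong : ∀ a b : W, P a → P b → Relation.ReflTransGen A a b := by
        intro a b ha hb
        have hsub : Finset.univ.filter (Relation.ReflTransGen A a) ⊆
            Finset.univ.filter (Relation.ReflTransGen A v0) := by
          intro c hc
          simp only [Finset.mem_filter, Finset.mem_univ, true_and] at hc ⊢
          exact ha.trans hc
        have hEq := Finset.eq_of_subset_of_card_le hsub (hv0 a (Finset.mem_univ a))
        have : b ∈ Finset.univ.filter (Relation.ReflTransGen A a) := by
          rw [hEq]
          simp only [Finset.mem_filter, Finset.mem_univ, true_and]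
          exact hb
        simpa using this
      have hmt' : IsMultipartiteTournament (fun a b : Subtype P => A a.1 b.1)
          (fun v : Subtype P => p v.1) :=
        ⟨fun a b h => hmt.not_adj_same a.1 b.1 h, fun a b h => hmt.total a.1 b.1 h,
         fun a b h => hmt.asymm a.1 b.1 h⟩
      have hstrong' : ∀ a b : Subtype P,
          Relation.ReflTransGen (fun a b : Subtype P => A a.1 b.1) a b := by
        intro a b
        exact reach_restrict hcl (hstrong a.1 b.1 a.2 b.2) a.2 b.2
      by_cases hall : ∀ t : Fin 3, ∃ v : Subtype P, p v.1 = t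
      · exfalso
        obtain ⟨a, b, c, h1, h2, h3⟩ := bondy3 hmt' hstrong' hall
        exact htri ⟨a.1, b.1, c.1, h1, h2, h3⟩
      · push_neg at hall
        obtain ⟨t, ht⟩ := hall
        have hpart : ∀ v : Subtype P, p v.1 = t + 1 ∨ p v.1 = t + 2 :=
          fun v => fin3_two t (p v.1) (ht v)
        have hδ'' : MinOutDegreeAtLeast (fun a b : Subtype P => A a.1 b.1)
            (2 * (k + 1) - 1) := by
          refine minOut_restrict P ?_
          intro v
          have e : {w : W // P w ∧ A v.1 w} ≃ {w : W // A v.1 w} :=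
            Equiv.subtypeEquivRight (fun w => ⟨And.right, fun h => ⟨hcl v.1 w v.2 h, h⟩⟩)
          rw [Nat.card_congr e]
          exact hδ v.1
        have hb := bip (k + 1) (fun a b : Subtype P => A a.1 b.1) (fun v => p v.1)
          hmt' (t + 1) (t + 2) hpart (fun _ => ⟨⟨v0, Relation.ReflTransGen.refl⟩⟩) hδ''
        exact lift_hasK Subtype.val Subtype.val_injective (fun a b h => h) hb

end Stmt3Aux

theorem stmt_3 {V : Type*} [Fintype V] (A : V → V → Prop) (p : V → Fin 3)
    (hp : Function.Surjective p) (k : ℕ)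
    (hmt : IsMultipartiteTournament A p)
    (hδ : MinOutDegreeAtLeast A (2 * k - 1)) :
    HasKDisjointCycles A k :=
  Stmt3Aux.main k A p hmt (fun _ => ⟨(hp 0).choose⟩) hδ
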